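/- As T → ∞, the first eigenvalue of the operator -d²/dτ² on (0,T) with boundary conditions u'(0) = -u(0) and u(T) = 0 satisfies λ₁(T) = -1 + 4(1+o(1))·e^{-2T}, and the second eigenvalue satisfies λ₂(T) ≥ 0. -/

import Mathlib

open MeasureTheory Real Set

/-- `lam` is an eigenvalue of `-d²/dτ²` on `(0,T)` with boundary conditions
`u'(0) = -u(0)` and `u(T) = 0`. -/
def IsRobinDirichletEigenvalue (T lam : ℝ) : Prop :=
  ∃ u : ℝ → ℝ, ContDiff ℝ 2 u ∧ (∃ τ ∈ Icc (0:ℝ) T, u τ ≠ 0) ∧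
    deriv u 0 = - u 0 ∧ u T = 0 ∧
    ∀ τ ∈ Icc (0:ℝ) T, - deriv (deriv u) τ = lam * u τ

lemma const_of_derivIcc {f : ℝ → ℝ} {a b : ℝ}
    (hf : ∀ x ∈ Set.Icc a b, HasDerivAt f 0 x) :
    ∀ x ∈ Set.Icc a b, f x = f a := by
  intro x hx
  have ha : a ∈ Set.Icc a b := Set.left_mem_Icc.2 (hx.1.trans hx.2)
  have := Convex.norm_image_sub_le_of_norm_hasDerivWithin_le
    (f' := fun _ => (0:ℝ)) (C := 0)
    (fun y hy => (hf y hy).hasDerivWithinAt) (fun y _ => by simp)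
    (convex_Icc a b) ha hx
  simpa [sub_eq_zero] using this

lemma eigen_neg_root {T lam : ℝ} (h : IsRobinDirichletEigenvalue T lam)
    (hneg : lam < 0) :
    ∃ κ : ℝ, 0 < κ ∧ κ < 1 ∧ (1 - κ) * Real.exp (2 * (κ * T)) = 1 + κ ∧ lam = -κ ^ 2 := by
  obtain ⟨u, hu, ⟨τ0, hτ0, hτ0ne⟩, hb0, hbT, heq⟩ := h
  set κ := Real.sqrt (-lam) with hκdef
  have hκpos : 0 < κ := Real.sqrt_pos.2 (by linarith)
  have hκsq : κ ^ 2 = -lam := Real.sq_sqrt (by linarith)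
  have heq' : ∀ τ ∈ Icc (0:ℝ) T, deriv (deriv u) τ = κ ^ 2 * u τ := by
    intro τ hτ; have := heq τ hτ; rw [hκsq]; linarith
  have hu' : ContDiff ℝ (1+1) u := by
    have h21 : ((2:WithTop ℕ∞)) = 1+1 := by norm_num
    rw [← h21]; exact hu
  have hu1 : Differentiable ℝ u := hu.differentiable (by norm_num)
  have hu2 : Differentiable ℝ (deriv u) := by
    have := (contDiff_succ_iff_deriv.mp hu').2.2
    exact this.differentiable (by norm_num)
  -- v = u' - κ u
  set v : ℝ → ℝ := fun τ => deriv u τ - κ * u τ with hv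
  have hvd : ∀ τ, HasDerivAt v (deriv (deriv u) τ - κ * deriv u τ) τ := by
    intro τ
    exact ((hu2 τ).hasDerivAt).sub (((hu1 τ).hasDerivAt).const_mul κ)
  -- w = exp(κτ) v is constant on Icc
  have hwd : ∀ τ ∈ Icc (0:ℝ) T, HasDerivAt (fun τ => Real.exp (κ * τ) * v τ) 0 τ := by
    intro τ hτ
    have he : HasDerivAt (fun τ => Real.exp (κ * τ)) (Real.exp (κ * τ) * κ) τ := by
      simpa using ((hasDerivAt_id τ).const_mul κ).exp
    have := he.mul (hvd τ)
    refine this.congr_deriv ?_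
    rw [heq' τ hτ]
    simp only [hv]; ring
  have hwc := const_of_derivIcc hwd
  have hvval : ∀ τ ∈ Icc (0:ℝ) T, v τ = Real.exp (-(κ * τ)) * v 0 := by
    intro τ hτ
    have := hwc τ hτ
    simp only [mul_zero, Real.exp_zero, one_mul] at this
    have hne : Real.exp (κ * τ) ≠ 0 := (Real.exp_pos _).ne'
    rw [Real.exp_neg]
    field_simp
    linarith [this]
  -- p = 2κ exp(-κτ) u + c exp(-2κτ) is constant on Icc
  set c : ℝ := v 0 with hc
  have hpd : ∀ τ ∈ Icc (0:ℝ) T,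
      HasDerivAt (fun τ => 2*κ * (Real.exp (-(κ * τ)) * u τ) + c * Real.exp (-(2*(κ*τ)))) 0 τ := by
    intro τ hτ
    have he : HasDerivAt (fun τ => Real.exp (-(κ * τ))) (Real.exp (-(κ * τ)) * (-κ)) τ := by
      simpa using (((hasDerivAt_id τ).const_mul κ).neg).exp
    have he2 : HasDerivAt (fun τ => Real.exp (-(2*(κ * τ)))) (Real.exp (-(2*(κ * τ))) * (-(2*κ))) τ := by
      have h0 : HasDerivAt (fun τ:ℝ => -(2*(κ * τ))) (-(2*κ)) τ := by
        exact ((((hasDerivAt_id τ).const_mul κ).const_mul 2).neg).congr_deriv (by ring)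
      simpa using h0.exp
    have := ((he.mul ((hu1 τ).hasDerivAt)).const_mul (2*κ)).add (he2.const_mul c)
    refine this.congr_deriv ?_
    have hvτ := hvval τ hτ
    have hee : Real.exp (-(κ*τ)) * Real.exp (-(κ*τ)) = Real.exp (-(2*(κ*τ))) := by
      rw [← Real.exp_add]; ring_nf
    simp only [hv] at hvτ
    have hd : deriv u τ = κ * u τ + Real.exp (-(κ*τ)) * c := by linarith
    rw [hd, ← hee]
    ring
  have hpc := const_of_derivIcc hpd
  have hval : ∀ τ ∈ Icc (0:ℝ) T,
      2*κ * (Real.exp (-(κ*τ)) * u τ) + c * Real.exp (-(2*(κ*τ))) = 2*κ*(u 0) + c := by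
    intro τ hτ
    have := hpc τ hτ
    simpa using this
  have hT0 : (0:ℝ) ≤ T := hτ0.1.trans hτ0.2
  have hTmem : T ∈ Icc (0:ℝ) T := ⟨hT0, le_refl T⟩
  have hc0 : c = -(1+κ) * u 0 := by simp only [hc, hv, hb0]; ring
  by_cases hu0 : u 0 = 0
  · exfalso
    have hcz : c = 0 := by rw [hc0, hu0]; ring
    have h0 := hval τ0 hτ0
    rw [hcz, hu0] at h0
    have h2 : (2*κ*Real.exp (-(κ*τ0))) * u τ0 = 0 := by linarith [h0]
    exact hτ0ne ((mul_eq_zero.mp h2).resolve_left (by positivity))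
  · refine ⟨κ, hκpos, ?_, ?_, by linarith [hκsq]⟩
    · -- κ < 1
      have hTv := hval T hTmem
      rw [hbT] at hTv
      rw [hc0] at hTv
      have h' : u 0 * ((1+κ) * Real.exp (-(2*(κ*T)))) = u 0 * (1-κ) := by
        linear_combination -hTv
      have key : (1+κ) * Real.exp (-(2*(κ*T))) = 1-κ := mul_left_cancel₀ hu0 h'
      nlinarith [Real.exp_pos (-(2*(κ*T))), key, hκpos]
    · have hTv := hval T hTmem
      rw [hbT] at hTv
      rw [hc0] at hTv
      have h' : u 0 * ((1+κ) * Real.exp (-(2*(κ*T)))) = u 0 * (1-κ) := by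
        linear_combination -hTv
      have key : (1+κ) * Real.exp (-(2*(κ*T))) = 1-κ := mul_left_cancel₀ hu0 h'
      have hE : Real.exp (2*(κ*T)) * Real.exp (-(2*(κ*T))) = 1 := by
        rw [← Real.exp_add]; simp
      linear_combination (1+κ) * hE - Real.exp (2*(κ*T)) * key

lemma root_eigen {T μ : ℝ} (hT : 0 ≤ T) (hμ0 : 0 < μ)
    (hroot : (1-μ)*Real.exp (2*(μ*T)) = 1+μ) :
    IsRobinDirichletEigenvalue T (-μ^2) := by
  set u : ℝ → ℝ := fun τ => (μ-1)*Real.exp (μ*τ) + (μ+1)*Real.exp (-(μ*τ)) with hu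
  set U : ℝ → ℝ := fun τ => μ*(μ-1)*Real.exp (μ*τ) - μ*(μ+1)*Real.exp (-(μ*τ)) with hU
  have h1 : ∀ τ : ℝ, HasDerivAt (fun τ => Real.exp (μ*τ)) (Real.exp (μ*τ) * μ) τ := by
    intro τ; simpa using ((hasDerivAt_id τ).const_mul μ).exp
  have h2 : ∀ τ : ℝ, HasDerivAt (fun τ => Real.exp (-(μ*τ))) (Real.exp (-(μ*τ)) * (-μ)) τ := by
    intro τ; simpa using (((hasDerivAt_id τ).const_mul μ).neg).exp
  have hd : ∀ τ, HasDerivAt u (U τ) τ := by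
    intro τ
    have := ((h1 τ).const_mul (μ-1)).add ((h2 τ).const_mul (μ+1))
    refine this.congr_deriv ?_
    simp only [hU]; ring
  have hderiv : deriv u = U := funext fun τ => (hd τ).deriv
  have hd2 : ∀ τ, HasDerivAt U (μ^2 * u τ) τ := by
    intro τ
    have := ((h1 τ).const_mul (μ*(μ-1))).sub ((h2 τ).const_mul (μ*(μ+1)))
    refine this.congr_deriv ?_
    simp only [hu]; ring
  have hderiv2 : deriv U = fun τ => μ^2 * u τ := funext fun τ => (hd2 τ).deriv
  refine ⟨u, ?_, ⟨0, ⟨le_refl 0, hT⟩, ?_⟩, ?_, ?_, ?_⟩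
  · simp only [hu]
    fun_prop
  · simp only [hu]
    norm_num
    intro h
    nlinarith [Real.exp_zero, h]
  · rw [hderiv]
    simp only [hU, hu]
    norm_num [Real.exp_zero]
    ring
  · simp only [hu]
    have hEE : Real.exp (2*(μ*T)) * Real.exp (-(μ*T)) = Real.exp (μ*T) := by
      rw [← Real.exp_add]; ring_nf
    linear_combination (1-μ)*hEE - Real.exp (-(μ*T)) * hroot
  · intro τ hτ
    rw [hderiv, hderiv2]
    ring

lemma root_unique {T a b : ℝ} (ha0 : 0 < a) (hb1 : b < 1) (hab : a < b)
    (hra : (1-a)*Real.exp (2*(a*T)) = 1+a) (hrb : (1-b)*Real.exp (2*(b*T)) = 1+b) : False := by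
  set h : ℝ → ℝ := fun x => Real.log (1+x) - Real.log (1-x) - 2*T*x with hh
  have hb0 : 0 < b := ha0.trans hab
  have ha1 : a < 1 := hab.trans hb1
  have hcont : ContinuousOn h (Icc 0 b) := by
    apply ContinuousOn.sub
    apply ContinuousOn.sub
    · exact ContinuousOn.log (by fun_prop) (fun x hx => by nlinarith [hx.1])
    · exact ContinuousOn.log (by fun_prop) (fun x hx => by nlinarith [hx.2])
    · fun_prop
  have hval : ∀ x : ℝ, 0 < x → x < 1 → (1-x)*Real.exp (2*(x*T)) = 1+x → h x = 0 := by
    intro x hx0 hx1 hr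
    have hlog := congrArg Real.log hr
    rw [Real.log_mul (by linarith) (Real.exp_ne_zero _), Real.log_exp] at hlog
    simp only [hh]
    ring_nf
    ring_nf at hlog
    linarith
  have h0 : h 0 = 0 := by simp [hh]
  have hdh : ∀ x : ℝ, -1 < x → x < 1 → deriv h x = 1/(1+x) + 1/(1-x) - 2*T := by
    intro x hx1 hx2
    have l1 : HasDerivAt (fun x:ℝ => Real.log (1+x)) ((1+x)⁻¹ * 1) x :=
      (Real.hasDerivAt_log (by linarith)).comp x ((hasDerivAt_id x).const_add 1)
    have l2 : HasDerivAt (fun x:ℝ => Real.log (1-x)) ((1-x)⁻¹ * (-1)) x :=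
      (Real.hasDerivAt_log (by linarith)).comp x ((hasDerivAt_id x).const_sub 1)
    have l3 : HasDerivAt (fun x:ℝ => 2*T*x) (2*T) x := by
      simpa using (hasDerivAt_id x).const_mul (2*T)
    have := ((l1.sub l2).sub l3).deriv
    simp only [hh]
    rw [show (fun x => Real.log (1 + x) - Real.log (1 - x) - 2 * T * x) = ((fun x:ℝ => Real.log (1+x)) - fun x => Real.log (1-x)) - fun x => 2*T*x from rfl, this]
    field_simp
    ring
  obtain ⟨ξ1, hξ1, hd1⟩ := exists_deriv_eq_zero ha0 (hcont.mono (Icc_subset_Icc le_rfl hab.le))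
    (h0.trans (hval a ha0 ha1 hra).symm)
  obtain ⟨ξ2, hξ2, hd2⟩ := exists_deriv_eq_zero hab (hcont.mono (Icc_subset_Icc ha0.le le_rfl))
    ((hval a ha0 ha1 hra).trans (hval b hb0 hb1 hrb).symm)
  have e1 : 1/(1+ξ1) + 1/(1-ξ1) - 2*T = 0 := by
    rw [← hdh ξ1 (by linarith [hξ1.1]) (by linarith [hξ1.2])]; exact hd1
  have e2 : 1/(1+ξ2) + 1/(1-ξ2) - 2*T = 0 := by
    rw [← hdh ξ2 (by linarith [hξ2.1]) (by linarith [hξ2.2])]; exact hd2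
  have hξ11 : ξ1 < 1 := by linarith [hξ1.2]
  have hξ21 : ξ2 < 1 := by linarith [hξ2.2]
  have hξ10 : 0 < ξ1 := hξ1.1
  have hξ20 : 0 < ξ2 := by linarith [hξ2.1]
  have hlt : ξ1 < ξ2 := by linarith [hξ1.2, hξ2.1]
  have d1 : (1+ξ1) ≠ 0 := by linarith
  have d2 : (1-ξ1) ≠ 0 := by linarith
  have d3 : (1+ξ2) ≠ 0 := by linarith
  have d4 : (1-ξ2) ≠ 0 := by linarith
  field_simp at e1 e2
  have hT : 0 < T := by
    nlinarith [e1, mul_pos (show (0:ℝ) < 1+ξ1 by linarith) (show (0:ℝ) < 1-ξ1 by linarith)]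
  nlinarith [e1, e2, mul_pos hT (mul_pos (sub_pos.2 hlt) (show (0:ℝ) < ξ1+ξ2 by linarith))]

theorem stmt3 (lam1 lam2 : ℝ → ℝ)
    (h1 : ∀ T ≥ (1:ℝ), IsRobinDirichletEigenvalue T (lam1 T) ∧
      ∀ lam, IsRobinDirichletEigenvalue T lam → lam1 T ≤ lam)
    (h2 : ∀ T ≥ (1:ℝ), IsRobinDirichletEigenvalue T (lam2 T) ∧ lam1 T < lam2 T ∧
      ∀ lam, IsRobinDirichletEigenvalue T lam → lam1 T < lam → lam2 T ≤ lam) :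
    (∃ ε : ℝ → ℝ, Filter.Tendsto ε Filter.atTop (nhds 0) ∧
      ∀ᶠ T in Filter.atTop, lam1 T = -1 + 4 * (1 + ε T) * Real.exp (-2*T)) ∧
    (∀ᶠ T in Filter.atTop, 0 ≤ lam2 T) := by
  have key : ∀ T : ℝ, 2 ≤ T → ∃ ν : ℝ, 1/2 < ν ∧ ν < 1 ∧ 1 - 2*Real.exp (-T) ≤ ν ∧
      (1-ν)*Real.exp (2*(ν*T)) = 1+ν ∧ lam1 T = -ν^2 := by
    intro T hT2
    have hT1 : (1:ℝ) ≤ T := by linarith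
    have hT0 : (0:ℝ) ≤ T := by linarith
    obtain ⟨μ, hμmem, hμroot⟩ : ∃ μ ∈ Ioo (1/2:ℝ) 1, ((1-μ)*Real.exp (2*(μ*T)) - (1+μ)) = 0 := by
      have hcont : ContinuousOn (fun x : ℝ => (1-x)*Real.exp (2*(x*T)) - (1+x)) (Icc (1/2) 1) := by
        fun_prop
      have hsub := intermediate_value_Ioo' (by norm_num : (1/2:ℝ) ≤ 1) hcont
      have hG1 : (1-(1:ℝ))*Real.exp (2*((1:ℝ)*T)) - (1+(1:ℝ)) < 0 := by norm_num
      have hGhalf : (0:ℝ) < (1-(1/2:ℝ))*Real.exp (2*((1/2:ℝ)*T)) - (1+(1/2:ℝ)) := by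
        have hTT : 2*((1/2:ℝ)*T) = T := by ring
        rw [hTT]
        have : T + 1 < Real.exp T := Real.add_one_lt_exp (by linarith)
        nlinarith
      obtain ⟨μ, hμ, hμ0⟩ := hsub ⟨hG1, hGhalf⟩
      exact ⟨μ, hμ, hμ0⟩
    have hμroot' : (1-μ)*Real.exp (2*(μ*T)) = 1+μ := by linarith
    obtain ⟨hμhalf, hμ1⟩ := hμmem
    have hμpos : 0 < μ := by linarith
    have heig := root_eigen hT0 hμpos hμroot'
    obtain ⟨he1, hmin⟩ := h1 T hT1
    have hle : lam1 T ≤ -μ^2 := hmin _ heig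
    have hneg : lam1 T < 0 := lt_of_le_of_lt hle (by nlinarith)
    obtain ⟨ν, hν0, hν1, hνroot, hνval⟩ := eigen_neg_root he1 hneg
    have hνμ : μ ≤ ν := by nlinarith
    have hνhalf : 1/2 < ν := lt_of_lt_of_le hμhalf hνμ
    have hbound : 1 - 2*Real.exp (-T) ≤ ν := by
      have hexp : Real.exp T ≤ Real.exp (2*(ν*T)) := Real.exp_le_exp.2 (by nlinarith)
      have h1ν : (1-ν) * Real.exp T ≤ 2 := by
        nlinarith [mul_le_mul_of_nonneg_left hexp (by linarith : (0:ℝ) ≤ 1-ν)]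
      have hinv : Real.exp (-T) * Real.exp T = 1 := by rw [← Real.exp_add]; simp
      nlinarith [mul_le_mul_of_nonneg_right h1ν (Real.exp_pos (-T)).le, Real.exp_pos (-T)]
    exact ⟨ν, hνhalf, hν1, hbound, hνroot, hνval⟩
  constructor
  · refine ⟨fun T => (lam1 T + 1) * Real.exp (2*T) / 4 - 1, ?_, ?_⟩
    · apply tendsto_of_tendsto_of_tendsto_of_le_of_le'
        (g := fun T => (1 - Real.exp (-T))^2 - 1)
        (h := fun T => Real.exp (4*(T*Real.exp (-T))) - 1)
      · have h1' : Filter.Tendsto (fun T : ℝ => 1 - Real.exp (-T)) Filter.atTop (nhds 1) := by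
          simpa using tendsto_const_nhds.sub Real.tendsto_exp_neg_atTop_nhds_zero
        have := (h1'.pow 2).sub_const 1
        norm_num at this
        exact this
      · have h4 : Filter.Tendsto (fun T:ℝ => 4*(T*Real.exp (-T))) Filter.atTop (nhds 0) := by
          have := (Real.tendsto_pow_mul_exp_neg_atTop_nhds_zero 1).const_mul 4
          simpa [pow_one] using this
        have := ((Real.continuous_exp.tendsto 0).comp h4).sub_const 1
        norm_num at this
        exact this
      · filter_upwards [Filter.eventually_ge_atTop (2:ℝ)] with T hT2
        obtain ⟨ν, hνhalf, hν1, hνlow, hνroot, hνval⟩ := key T hT2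
        have hfact : (1-ν^2) * Real.exp (2*(ν*T)) = (1+ν)^2 := by
          linear_combination (1+ν)*hνroot
        have hsplit : Real.exp (2*T) = Real.exp (2*(ν*T)) * Real.exp (2*T - 2*(ν*T)) := by
          rw [← Real.exp_add]; ring_nf
        have hform : (1-ν^2) * Real.exp (2*T) = (1+ν)^2 * Real.exp (2*T - 2*(ν*T)) := by
          rw [hsplit, ← mul_assoc, hfact]
        have hC1 : (1:ℝ) ≤ Real.exp (2*T - 2*(ν*T)) := Real.one_le_exp (by nlinarith)
        have hexpT1 : Real.exp (-T) ≤ 1 := Real.exp_le_one_iff.2 (by linarith)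
        have hsq : (2 - 2*Real.exp (-T))^2 ≤ (1+ν)^2 := by nlinarith
        have hchain : (2 - 2*Real.exp (-T))^2 ≤ (1-ν^2)*Real.exp (2*T) := by
          rw [hform]
          nlinarith [mul_le_mul hsq hC1 (by norm_num) (by positivity : (0:ℝ) ≤ (1+ν)^2)]
        rw [hνval]
        nlinarith [hchain]
      · filter_upwards [Filter.eventually_ge_atTop (2:ℝ)] with T hT2
        obtain ⟨ν, hνhalf, hν1, hνlow, hνroot, hνval⟩ := key T hT2
        have hfact : (1-ν^2) * Real.exp (2*(ν*T)) = (1+ν)^2 := by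
          linear_combination (1+ν)*hνroot
        have hsplit : Real.exp (2*T) = Real.exp (2*(ν*T)) * Real.exp (2*T - 2*(ν*T)) := by
          rw [← Real.exp_add]; ring_nf
        have hform : (1-ν^2) * Real.exp (2*T) = (1+ν)^2 * Real.exp (2*T - 2*(ν*T)) := by
          rw [hsplit, ← mul_assoc, hfact]
        have hCle : Real.exp (2*T - 2*(ν*T)) ≤ Real.exp (4*(T*Real.exp (-T))) := by
          apply Real.exp_le_exp.2
          nlinarith [mul_nonneg (by linarith : (0:ℝ) ≤ T)
            (by linarith : (0:ℝ) ≤ 2*Real.exp (-T) - (1-ν))]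
        have h1ν4 : (1+ν)^2 ≤ 4 := by nlinarith
        have hchain : (1-ν^2)*Real.exp (2*T) ≤ 4 * Real.exp (4*(T*Real.exp (-T))) := by
          rw [hform]
          nlinarith [mul_le_mul h1ν4 hCle (Real.exp_pos _).le (by norm_num : (0:ℝ) ≤ 4)]
        rw [hνval]
        nlinarith [hchain]
    · filter_upwards with T
      have hE : Real.exp (2*T) * Real.exp (-2*T) = 1 := by
        rw [← Real.exp_add]; norm_num
      linear_combination (-(lam1 T + 1)) * hE
  · filter_upwards [Filter.eventually_ge_atTop (2:ℝ)] with T hT2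
    by_contra hcon
    push_neg at hcon
    obtain ⟨ν, hνhalf, hν1, _, hνroot, hνval⟩ := key T hT2
    obtain ⟨he2, hlt, _⟩ := h2 T (by linarith)
    obtain ⟨κ, hκ0, hκ1, hκroot, hκval⟩ := eigen_neg_root he2 hcon
    have hκν : κ < ν := by nlinarith
    exact root_unique hκ0 hν1 hκν hκroot hνroot
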